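/- Let S be a finite semigroup of cardinality n. Then S has trivial local monoids if and only if S satisfies the LI_{n+1} identity. -/

import Mathlib

section LIAux

variable {S : Type*} [Semigroup S]

/-- In a semigroup with trivial local monoids, `e * s * f = e * f` for idempotents `e, f`. -/
lemma li_sandwich (hLI : ∀ e x : S, e * e = e → e * x * e = e) {e f : S}
    (he : e * e = e) (hf : f * f = f) (s : S) : e * s * f = e * f := by
  have h1 : e * (s * f) * e = e := hLI e (s * f) he
  have h2 : f * e * f = f := hLI f e hf
  calc e * s * f = e * s * (f * e * f) := by rw [h2]
    _ = (e * (s * f) * e) * f := by simp [mul_assoc]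
    _ = e * f := by rw [h1]

lemma li_sandwich_withOne (hLI : ∀ e x : S, e * e = e → e * x * e = e) {e f : S}
    (he : e * e = e) (hf : f * f = f) (u : WithOne S) :
    (e : WithOne S) * u * (f : WithOne S) = (e : WithOne S) * f := by
  rcases u with _ | s
  · show (e : WithOne S) * 1 * f = _
    rw [mul_one]
  · show (e : WithOne S) * (s : S) * f = _
    rw [← WithOne.coe_mul, ← WithOne.coe_mul, ← WithOne.coe_mul]
    exact congrArg _ (li_sandwich hLI he hf s)

/-- In a finite monoid, some positive power of every element is idempotent. -/
lemma exists_idem_pow {M : Type*} [Monoid M] [Finite M] (a : M) :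
    ∃ k, 0 < k ∧ a ^ k * a ^ k = a ^ k := by
  obtain ⟨i, j, hij, hpow⟩ := Finite.exists_ne_map_eq_of_infinite (fun n : ℕ => a ^ (n + 1))
  wlog hlt : i < j generalizing i j
  · exact this j i hij.symm hpow.symm (by omega)
  set s := i + 1 with hs
  set d := j - i with hd
  have hstep : ∀ N, s ≤ N → a ^ (N + d) = a ^ N := by
    intro N hN
    have h1 : a ^ (N + d) = a ^ (N - s) * a ^ (s + d) := by
      rw [← pow_add]; congr 1; omega
    have h2 : a ^ (s + d) = a ^ s := by
      have : s + d = j + 1 := by omega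
      rw [this]; exact hpow.symm
    rw [h1, h2, ← pow_add]
    congr 1; omega
  have key : ∀ k N, s ≤ N → a ^ (N + k * d) = a ^ N := by
    intro k
    induction k with
    | zero => intro N _; simp
    | succ k ih =>
      intro N hN
      have : N + (k + 1) * d = (N + k * d) + d := by ring
      rw [this, hstep _ (by omega), ih N hN]
  have hd1 : 1 ≤ d := by omega
  have hle : s ≤ s * d := Nat.le_mul_of_pos_right s (by omega)
  refine ⟨s * d, Nat.mul_pos (by omega) (by omega), ?_⟩
  rw [← pow_add]
  exact key s (s * d) hle

/-- Product in `WithOne S` of the coercion of a list over `S`. -/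
def cProd (l : List S) : WithOne S := (l.map (fun s : S => (s : WithOne S))).prod

lemma cProd_append (u v : List S) : cProd (u ++ v) = cProd u * cProd v := by
  simp [cProd]

lemma cProd_cons (a : S) (t : List S) : cProd (a :: t) = (a : WithOne S) * cProd t := by
  simp [cProd]

/-- `S`-valued product of `a :: l`. -/
def sProd (a : S) (l : List S) : S := l.foldl (· * ·) a

lemma coe_sProd (l : List S) : ∀ a : S, (↑(sProd a l) : WithOne S) = (a : WithOne S) * cProd l := by
  induction l with
  | nil => intro a; simp [sProd, cProd]
  | cons b t ih =>
    intro a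
    rw [cProd_cons, ← mul_assoc, ← WithOne.coe_mul]
    exact ih (a * b)

lemma coe_pow_exists (w : S) (k : ℕ) : ∃ s : S, ((w : WithOne S)) ^ (k + 1) = (s : WithOne S) := by
  induction k with
  | zero => exact ⟨w, pow_one _⟩
  | succ k ih =>
    obtain ⟨s, hs⟩ := ih
    exact ⟨s * w, by rw [pow_succ, hs, WithOne.coe_mul]⟩

/-- Any product of more than `card S` elements decomposes around a coerced idempotent. -/
lemma li_decomp [Fintype S] (l : List S) (hl : Fintype.card S < l.length) :
    ∃ (e : S) (A B : WithOne S), e * e = e ∧ cProd l = A * (e : WithOne S) * B := by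
  obtain ⟨a, t, rfl⟩ : ∃ a t, l = a :: t := by
    cases l with
    | nil => simp at hl
    | cons a t => exact ⟨a, t, rfl⟩
  have ht : Fintype.card S ≤ t.length := by
    simpa using Nat.lt_succ_iff.mp (by simpa using hl)
  set n := Fintype.card S with hn
  set g : Fin (n + 1) → S := fun i => sProd a (t.take i) with hg
  obtain ⟨i, j, hij, heq⟩ := Fintype.exists_ne_map_eq_of_card_lt g (by simp [hn])
  wlog hlt : (i : ℕ) < (j : ℕ) generalizing i j
  · exact this j i hij.symm heq.symm (by omega)
  have htake : t.take (j : ℕ) = t.take (i : ℕ) ++ (t.drop i).take ((j : ℕ) - i) := by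
    have h1 : (j : ℕ) = (i : ℕ) + ((j : ℕ) - i) := by omega
    conv_lhs => rw [h1]
    exact List.take_add
  have hmidlen : 0 < ((t.drop i).take ((j : ℕ) - i)).length := by
    rw [List.length_take, List.length_drop]
    have hj : (j : ℕ) ≤ t.length := le_trans (by omega) ht
    omega
  obtain ⟨b, m, hm⟩ : ∃ b m', (t.drop i).take ((j : ℕ) - i) = b :: m' := by
    cases h : (t.drop i).take ((j : ℕ) - i) with
    | nil => rw [h] at hmidlen; simp at hmidlen
    | cons b m' => exact ⟨b, m', rfl⟩
  set w := sProd b m with hw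
  have hcmid : cProd ((t.drop i).take ((j : ℕ) - i)) = (w : WithOne S) := by
    rw [hm, cProd_cons, ← coe_sProd]
  have hgj : (↑(g j) : WithOne S) = ↑(g i) * (w : WithOne S) := by
    rw [hg]
    simp only
    rw [coe_sProd, coe_sProd, htake, cProd_append, hcmid, mul_assoc]
  have hfix : (↑(g i) : WithOne S) = ↑(g i) * (w : WithOne S) := by
    rw [← hgj, heq]
  have habs : ∀ k : ℕ, (↑(g i) : WithOne S) * (w : WithOne S) ^ k = ↑(g i) := by
    intro k
    induction k with
    | zero => simp
    | succ k ih => rw [pow_succ, ← mul_assoc, ih, ← hfix]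
  haveI : Finite (WithOne S) := Finite.of_equiv (Option S) (Equiv.refl _)
  obtain ⟨k, hk, hid⟩ := exists_idem_pow ((w : WithOne S))
  obtain ⟨e, he⟩ := coe_pow_exists w (k - 1)
  have hke : ((w : WithOne S)) ^ k = (e : WithOne S) := by
    have : k - 1 + 1 = k := by omega
    rw [← this]; exact he
  refine ⟨e, ↑(g i), cProd (t.drop j), ?_, ?_⟩
  · rw [← WithOne.coe_inj, WithOne.coe_mul, ← hke, hid]
  · rw [cProd_cons, ← List.take_append_drop (j : ℕ) t, cProd_append, ← mul_assoc,
      ← coe_sProd]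
    have : (↑(sProd a (t.take (j : ℕ))) : WithOne S) = ↑(g i) * (e : WithOne S) := by
      show (↑(g j) : WithOne S) = _
      rw [← heq, ← hke]
      exact (habs k).symm
    rw [this]
    simp [List.take_append_drop]

end LIAux

/-- A semigroup `S` satisfies the LI_k identity if
`x₁⋯x_k · z · y_k⋯y₁ = x₁⋯x_k · y_k⋯y₁` for all `x₁,…,x_k, y₁,…,y_k, z ∈ S`.
Products of the (non-empty, for `k ≥ 1`) sequences are computed in the monoid
`WithOne S`, into which `S` embeds. -/
def SatisfiesLI (S : Type*) [Semigroup S] (k : ℕ) : Prop :=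
  ∀ (x y : Fin k → S) (z : S),
    (List.ofFn fun i => (x i : WithOne S)).prod * (z : WithOne S) *
        ((List.ofFn fun i => (y i : WithOne S)).reverse.prod) =
      (List.ofFn fun i => (x i : WithOne S)).prod *
        ((List.ofFn fun i => (y i : WithOne S)).reverse.prod)

/-- A finite semigroup of cardinality `n` has trivial local monoids if and only if
it satisfies the LI_{n+1} identity. -/
theorem stmt_1 {S : Type*} [Semigroup S] [Fintype S] :
    (∀ e x : S, e * e = e → e * x * e = e) ↔ SatisfiesLI S (Fintype.card S + 1) := by
  constructor
  · intro hLI x y z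
    have hx : (List.ofFn fun i => ((x i) : WithOne S)) =
        (List.ofFn x).map (fun s : S => (s : WithOne S)) := by
      rw [List.map_ofFn]; rfl
    have hy : (List.ofFn fun i => ((y i) : WithOne S)) =
        (List.ofFn y).map (fun s : S => (s : WithOne S)) := by
      rw [List.map_ofFn]; rfl
    have hx' : (List.ofFn fun i => ((x i) : WithOne S)).prod = cProd (List.ofFn x) := by
      rw [hx]; rfl
    have hy' : (List.ofFn fun i => ((y i) : WithOne S)).reverse.prod =
        cProd ((List.ofFn y).reverse) := by
      rw [hy, ← List.map_reverse]; rfl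
    rw [hx', hy']
    obtain ⟨e, A, R, he, hP⟩ := li_decomp (List.ofFn x) (by simp)
    obtain ⟨f, L, B, hf, hQ⟩ := li_decomp ((List.ofFn y).reverse) (by simp)
    rw [hP, hQ]
    have key := li_sandwich_withOne hLI he hf
    calc A * ↑e * R * ↑z * (L * ↑f * B)
        = A * (↑e * (R * ↑z * L) * ↑f) * B := by simp only [mul_assoc]
      _ = A * (↑e * ↑f) * B := by rw [key]
      _ = A * (↑e * (R * L) * ↑f) * B := by rw [key]
      _ = A * ↑e * R * (L * ↑f * B) := by simp only [mul_assoc]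
  · intro h e x he
    have hthis := h (fun _ => e) (fun _ => e) x
    have hee : ((e : WithOne S)) ^ (Fintype.card S + 1) = (e : WithOne S) :=
      IsIdempotentElem.pow_succ_eq _ (by
        show (e : WithOne S) * e = e
        rw [← WithOne.coe_mul, he])
    rw [List.ofFn_const, List.reverse_replicate, List.prod_replicate, hee] at hthis
    rw [← WithOne.coe_mul, ← WithOne.coe_mul, ← WithOne.coe_mul, he] at hthis
    exact WithOne.coe_inj.mp hthis
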